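/- Let q, s, n' > 0 and let G be a graph containing a (q, s, n') connected tripartite cover. Then G contains a square cycle on at least n' vertices; that is, there exist an integer l ≥ n' and distinct vertices w₀, w₁, …, w_{l−1} of G such that w_i is adjacent to w_{(i+1) mod l} and to w_{(i+2) mod l} for every i. -/

import Mathlib

/-- `l` is a square path in `G`. -/
def IsSquarePath {V : Type*} (G : SimpleGraph V) (l : List V) : Prop :=
  l.Nodup ∧ ∀ i j : Fin l.length,
    (i.val + 1 = j.val ∨ i.val + 2 = j.val) → G.Adj (l.get i) (l.get j)

/-- A `(q, s, n')` connected tripartite cover of `G`. -/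
def ConnTripartiteCover {V : Type*} [Fintype V] [DecidableEq V] (G : SimpleGraph V)
    (q s n' : ℝ) : Prop :=
  ∃ (m : ℕ) (A : Fin m → Fin 3 → Finset V) (t : Fin m → ℕ) (P : Fin m → List V),
    (∀ i, ⌊s⌋₊ ≤ t i ∧ t i ≤ ⌈2 * s⌉₊) ∧
    (∀ i a, (A i a).card = t i) ∧
    (∀ i a j b, (i, a) ≠ (j, b) → Disjoint (A i a) (A j b)) ∧
    (∀ i, ∀ a b : Fin 3, a ≠ b → ∀ u ∈ A i a, ∀ v ∈ A i b, G.Adj u v) ∧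
    n' ≤ ((∑ i, 3 * t i : ℕ) : ℝ) ∧
    (∀ i, IsSquarePath G (P i)) ∧
    (∀ i j, i ≠ j → (P i).Disjoint (P j)) ∧
    (∀ i : Fin m, ∃ (u v : Fin 3 → V) (Q : List V),
      P i = [u 0, u 1, u 2] ++ Q ++ [v 0, v 1, v 2] ∧
      (Q.length : ℝ) ≤ q ∧
      (∀ a, u a ∈ A i a) ∧
      (∀ a, v a ∈ A ⟨(i.val + 1) % m, Nat.mod_lt _ i.pos⟩ a) ∧
      (∀ x ∈ Q, ∀ j a, x ∉ A j a))

/-- square-sequence adjacency (no nodup). -/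
def SqS {V : Type*} (G : SimpleGraph V) (L : List V) : Prop :=
  ∀ (i d : ℕ), (d = 1 ∨ d = 2) → ∀ (h : i + d < L.length),
    G.Adj (L[i]'(by omega)) (L[i+d]'h)

section SqSLemmas
variable {V : Type*} {G : SimpleGraph V}

lemma sqs_prefix {p q : List V} (h : SqS G (p ++ q)) : SqS G p := by
  intro i d hd hlt
  have hlen : i + d < (p ++ q).length := by
    simp only [List.length_append]; omega
  have := h i d hd hlen
  rwa [List.getElem_append_left (by omega), List.getElem_append_left hlt] at this

lemma sqs_suffix {p q : List V} (h : SqS G (p ++ q)) : SqS G q := by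
  intro i d hd hlt
  have hlen : (p.length + i) + d < (p ++ q).length := by
    simp only [List.length_append]; omega
  have := h (p.length + i) d hd hlen
  rw [List.getElem_append_right (i := p.length + i) (by omega),
    List.getElem_append_right (i := p.length + i + d) (by omega)] at this
  have e1 : p.length + i - p.length = i := by omega
  have e2 : p.length + i + d - p.length = i + d := by omega
  simp only [e1, e2] at this
  exact this

lemma sqs_glue {p s q : List V} (h1 : SqS G (p ++ s)) (h2 : SqS G (s ++ q))
    (hs : 2 ≤ s.length) : SqS G (p ++ (s ++ q)) := by
  intro i d hd hlt
  simp only [List.length_append] at hlt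
  by_cases hc : i + d < p.length + s.length
  · have hlen : i + d < (p ++ s).length := by simp only [List.length_append]; omega
    have := h1 i d hd hlen
    have e : p ++ (s ++ q) = (p ++ s) ++ q := by rw [List.append_assoc]
    rw [List.getElem_of_eq e, List.getElem_of_eq e,
      List.getElem_append_left (by omega), List.getElem_append_left hlen]
    exact this
  · have hip : p.length ≤ i := by omega
    have hlen : (i - p.length) + d < (s ++ q).length := by
      simp only [List.length_append]; omega
    have := h2 (i - p.length) d hd hlen
    rw [List.getElem_append_right (i := i) hip,
      List.getElem_append_right (i := i + d) (show p.length ≤ i + d by omega)]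
    have e2 : i + d - p.length = i - p.length + d := by omega
    simp only [e2]
    exact this

end SqSLemmas

theorem stmt14 (q s n' : ℝ) (hq : 0 < q) (hs : 0 < s) (hn' : 0 < n')
    (V : Type) [Fintype V] [DecidableEq V] (G : SimpleGraph V)
    (h : ConnTripartiteCover G q s n') :
    ∃ (l : ℕ) (w : Fin l → V), n' ≤ l ∧ Function.Injective w ∧
      ∀ i j : Fin l, ((i.val + 1) % l = j.val ∨ (i.val + 2) % l = j.val) →
        G.Adj (w i) (w j) := by
  classical
  obtain ⟨m, A, t, P, ht, hcard, hdisj, hadj, hsum, hsqp, hPdisj, hends⟩ := h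
  have hm : 0 < m := by
    rcases Nat.eq_zero_or_pos m with h0 | h0
    · subst h0; simp at hsum; linarith
    · exact h0
  choose u v Q hPeq hQlen hu hv hQA using hends
  -- predecessor function
  set pred : Fin m → Fin m := fun i => ⟨(i.val + (m-1)) % m, Nat.mod_lt _ hm⟩ with hpred
  have hprednext : ∀ i : Fin m,
      (⟨((pred i).val + 1) % m, Nat.mod_lt _ hm⟩ : Fin m) = i := by
    intro i
    apply Fin.ext
    show ((i.val + (m-1)) % m + 1) % m = i.val
    rw [Nat.mod_add_mod]
    have e : i.val + (m-1) + 1 = i.val + m := by omega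
    rw [e, Nat.add_mod_right, Nat.mod_eq_of_lt i.isLt]
  have hv' : ∀ (i : Fin m) (a : Fin 3), v (pred i) a ∈ A i a := by
    intro i a
    have h1 := hv (pred i) a
    have h2 : (⟨((pred i).val + 1) % m, Nat.mod_lt _ (pred i).pos⟩ : Fin m) =
        (⟨((pred i).val + 1) % m, Nat.mod_lt _ hm⟩ : Fin m) := rfl
    rw [h2, hprednext i] at h1
    exact h1
  have huP : ∀ (i : Fin m) (a : Fin 3), u i a ∈ P i := by
    intro i a
    rw [hPeq i]
    fin_cases a <;> simp
  have hvP : ∀ (i : Fin m) (a : Fin 3), v i a ∈ P i := by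
    intro i a
    rw [hPeq i]
    fin_cases a <;> simp
  have hune : ∀ (i : Fin m) (a : Fin 3), v (pred i) a ≠ u i a := by
    intro i a he
    by_cases hmi : pred i = i
    · have hnd : (P i).Nodup := (hsqp i).1
      rw [hPeq i] at hnd
      have hdj := (List.nodup_append.1 hnd).2.2
      have h1 : u i a ∈ [u i 0, u i 1, u i 2] ++ Q i := by
        apply List.mem_append_left
        fin_cases a <;> simp
      have h2 : u i a ∈ [v i 0, v i 1, v i 2] := by
        rw [hmi] at he
        rw [← he]
        fin_cases a <;> simp
      exact hdj _ h1 _ h2 rfl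
    · exact hPdisj (pred i) i hmi (hvP (pred i) a) (by rw [he]; exact huP i a)
  have ht2 : ∀ i, 2 ≤ t i := by
    intro i
    have hsub : ({v (pred i) 0, u i 0} : Finset V) ⊆ A i 0 := by
      intro x hx
      rcases Finset.mem_insert.1 hx with rfl | hx
      · exact hv' i 0
      · rw [Finset.mem_singleton.1 hx]; exact hu i 0
    have := Finset.card_le_card hsub
    rwa [Finset.card_pair (hune i 0), hcard i 0] at this
  -- the ordered lists for each color class
  set L : Fin m → Fin 3 → List V := fun i a =>
    v (pred i) a :: ((((A i a).erase (v (pred i) a)).erase (u i a)).toList ++ [u i a])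
    with hLdef
  have huerase : ∀ (i : Fin m) (a : Fin 3),
      u i a ∈ (A i a).erase (v (pred i) a) :=
    fun i a => Finset.mem_erase.2 ⟨fun h => hune i a h.symm, hu i a⟩
  have hLlen : ∀ (i : Fin m) (a : Fin 3), (L i a).length = t i := by
    intro i a
    show ((((A i a).erase (v (pred i) a)).erase (u i a)).toList ++ [u i a]).length + 1 = t i
    rw [List.length_append, Finset.length_toList, Finset.card_erase_of_mem (huerase i a),
      Finset.card_erase_of_mem (hv' i a), hcard i a]
    have := ht2 i
    simp
    omega
  have hLmem : ∀ (i : Fin m) (a : Fin 3) (x : V), x ∈ L i a → x ∈ A i a := by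
    intro i a x hx
    rcases List.mem_cons.1 hx with rfl | hx
    · exact hv' i a
    rcases List.mem_append.1 hx with hx | hx
    · exact Finset.mem_of_mem_erase (Finset.mem_of_mem_erase (Finset.mem_toList.1 hx))
    · rw [List.mem_singleton.1 hx]; exact hu i a
  have hLnd : ∀ (i : Fin m) (a : Fin 3), (L i a).Nodup := by
    intro i a
    rw [List.nodup_cons, List.nodup_append]
    refine ⟨?_, Finset.nodup_toList _, by simp, ?_⟩
    · intro hx
      rcases List.mem_append.1 hx with hx | hx
      · have := Finset.mem_toList.1 hx
        exact (Finset.mem_erase.1 (Finset.mem_of_mem_erase this)).1 rfl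
      · exact hune i a (List.mem_singleton.1 hx)
    · intro x hx
      simp only [List.mem_singleton]
      intro b hb he
      subst hb; subst he
      exact (Finset.mem_erase.1 (Finset.mem_toList.1 hx)).1 rfl
  have hLget0 : ∀ (i : Fin m) (a : Fin 3) (h0 : 0 < (L i a).length),
      (L i a)[0] = v (pred i) a := fun i a h0 => rfl
  have hLgetlast : ∀ (i : Fin m) (a : Fin 3) (hl : t i - 1 < (L i a).length),
      (L i a)[t i - 1] = u i a := by
    intro i a hl
    have hsh : L i a = (v (pred i) a ::
        (((A i a).erase (v (pred i) a)).erase (u i a)).toList) ++ [u i a] := by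
      simp [hLdef]
    have hlen2 : (v (pred i) a ::
        (((A i a).erase (v (pred i) a)).erase (u i a)).toList).length = t i - 1 := by
      simp only [List.length_cons, Finset.length_toList,
        Finset.card_erase_of_mem (huerase i a), Finset.card_erase_of_mem (hv' i a),
        hcard i a]
      have := ht2 i
      omega
    rw [List.getElem_of_eq hsh, List.getElem_append_right (by omega)]
    simp [hlen2]
  -- a default vertex
  set d0 : V := u ⟨0, hm⟩ 0 with hd0
  set g : Fin m → ℕ → V := fun i k =>
    (L i ⟨k % 3, Nat.mod_lt _ (by norm_num)⟩).getD (k / 3) d0 with hg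
  have hgval : ∀ (i : Fin m) (k : ℕ) (c : Fin 3), k % 3 = c.val →
      g i k = (L i c).getD (k / 3) d0 := by
    intro i k c hkc
    show (L i ⟨k % 3, Nat.mod_lt _ (by norm_num)⟩).getD (k / 3) d0 = _
    congr 1
    exact congrArg (L i) (Fin.ext hkc)
  have hgval' : ∀ (i : Fin m) (k : ℕ) (c : Fin 3), k % 3 = c.val → k < 3 * t i →
      ∃ (hk : k / 3 < (L i c).length), g i k = (L i c)[k / 3] := by
    intro i k c hkc hklt
    have hk : k / 3 < (L i c).length := by rw [hLlen]; omega
    exact ⟨hk, by rw [hgval i k c hkc, List.getD_eq_getElem _ _ hk]⟩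
  set Ord : Fin m → List V := fun i => (List.range (3 * t i)).map (g i) with hOrddef
  have hOrdlen : ∀ i, (Ord i).length = 3 * t i := by
    intro i; simp [hOrddef]
  have hOrdget : ∀ (i : Fin m) (k : ℕ) (hk : k < (Ord i).length),
      (Ord i)[k] = g i k := by
    intro i k hk
    simp [hOrddef]
  have hOrdmem : ∀ (i : Fin m) (k : ℕ) (hk : k < (Ord i).length),
      (Ord i)[k] ∈ A i ⟨k % 3, Nat.mod_lt _ (by norm_num)⟩ := by
    intro i k hk
    rw [hOrdlen] at hk
    obtain ⟨hk3, hval⟩ := hgval' i k ⟨k % 3, Nat.mod_lt _ (by norm_num)⟩ rfl hk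
    rw [hOrdget i k (by rw [hOrdlen]; exact hk), hval]
    exact hLmem _ _ _ (List.getElem_mem hk3)
  have hOrdmem' : ∀ (i : Fin m) (x : V), x ∈ Ord i → ∃ c : Fin 3, x ∈ A i c := by
    intro i x hx
    obtain ⟨k, hk, rfl⟩ := List.mem_iff_getElem.1 hx
    exact ⟨_, hOrdmem i k hk⟩
  have hOrdsq : ∀ i, SqS G (Ord i) := by
    intro i k d hd hlt
    have hne : (⟨k % 3, Nat.mod_lt _ (by norm_num)⟩ : Fin 3) ≠
        ⟨(k + d) % 3, Nat.mod_lt _ (by norm_num)⟩ := by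
      intro hc
      have := congrArg Fin.val hc
      simp only at this
      omega
    exact hadj i _ _ hne _ (hOrdmem i k (by omega)) _ (hOrdmem i (k + d) hlt)
  have hOrdnd : ∀ i, (Ord i).Nodup := by
    intro i
    rw [List.nodup_iff_injective_get]
    rintro ⟨k, hk⟩ ⟨k', hk'⟩ hkk
    simp only [List.get_eq_getElem] at hkk
    by_cases hcls : k % 3 = k' % 3
    · have hk3 := hk; have hk3' := hk'
      rw [hOrdlen] at hk3 hk3'
      obtain ⟨hka, hva⟩ := hgval' i k ⟨k % 3, Nat.mod_lt _ (by norm_num)⟩ rfl hk3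
      obtain ⟨hkb, hvb⟩ := hgval' i k' ⟨k % 3, Nat.mod_lt _ (by norm_num)⟩ hcls.symm hk3'
      rw [hOrdget i k hk, hOrdget i k' hk', hva, hvb] at hkk
      have := ((hLnd i _).getElem_inj_iff).1 hkk
      apply Fin.ext
      simp only
      omega
    · exfalso
      have hm1 := hOrdmem i k hk
      have hm2 := hOrdmem i k' hk'
      rw [hkk] at hm1
      have hne : ((i, (⟨k % 3, Nat.mod_lt _ (by norm_num)⟩ : Fin 3))) ≠
          ((i, (⟨k' % 3, Nat.mod_lt _ (by norm_num)⟩ : Fin 3))) := by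
        intro hc
        rw [Prod.ext_iff] at hc
        exact hcls (congrArg Fin.val hc.2)
      exact Finset.disjoint_left.1 (hdisj _ _ _ _ hne) hm1 hm2
  -- g values at the start
  have hg0 : ∀ (i : Fin m) (a : Fin 3), g i a.val = v (pred i) a := by
    intro i a
    have ha3 : a.val % 3 = a.val := Nat.mod_eq_of_lt a.isLt
    rw [hgval i a.val a ha3]
    have ha0 : a.val / 3 = 0 := Nat.div_eq_of_lt a.isLt
    rw [ha0]
    exact List.getD_cons_zero
  -- g values at the end
  have hgu : ∀ (i : Fin m) (a : Fin 3), g i (3 * (t i) - 3 + a.val) = u i a := by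
    intro i a
    have h2 := ht2 i
    have ha3 : (3 * (t i) - 3 + a.val) % 3 = a.val := by
      have := a.isLt; omega
    rw [hgval i _ a ha3]
    have ha0 : (3 * (t i) - 3 + a.val) / 3 = t i - 1 := by
      have := a.isLt; omega
    rw [ha0]
    have hl : t i - 1 < (L i a).length := by rw [hLlen]; omega
    rw [List.getD_eq_getElem _ _ hl]
    exact hLgetlast i a hl
  -- structural decompositions of Ord
  have hOrdT : ∀ i : Fin m, ∃ Z : List V,
      Ord i = [v (pred i) 0, v (pred i) 1, v (pred i) 2] ++ Z := by
    intro i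
    have h2 := ht2 i
    have he : 3 * t i = 3 + (3 * t i - 3) := by omega
    have hsp : Ord i = List.map (g i) (List.range 3) ++
        List.map (g i) (List.map (fun x => 3 + x) (List.range (3 * t i - 3))) := by
      rw [hOrddef]
      simp only
      rw [he, List.range_add, List.map_append,
        show 3 + (3 * t i - 3) - 3 = 3 * t i - 3 from by omega]
    refine ⟨List.map (g i) (List.map (fun x => 3 + x) (List.range (3 * t i - 3))), ?_⟩
    rw [hsp]
    have e0 : g i 0 = v (pred i) 0 := hg0 i 0
    have e1 : g i 1 = v (pred i) 1 := hg0 i 1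
    have e2 : g i 2 = v (pred i) 2 := hg0 i 2
    show [g i 0, g i 1, g i 2] ++
      List.map (g i) (List.map (fun x => 3 + x) (List.range (3 * t i - 3))) = _
    rw [e0, e1, e2]
  have hOrdU : ∀ i : Fin m, ∃ Y : List V,
      Ord i = Y ++ [u i 0, u i 1, u i 2] := by
    intro i
    have h2 := ht2 i
    have he : 3 * t i = (3 * t i - 3) + 3 := by omega
    have hsp : Ord i = List.map (g i) (List.range (3 * t i - 3)) ++
        List.map (g i) (List.map (fun x => (3 * t i - 3) + x) (List.range 3)) := by
      rw [hOrddef]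
      simp only
      rw [he, List.range_add, List.map_append,
        show 3 * t i - 3 + 3 - 3 = 3 * t i - 3 from by omega]
    refine ⟨List.map (g i) (List.range (3 * t i - 3)), ?_⟩
    rw [hsp]
    have f0 : g i (3 * t i - 3 + 0) = u i 0 := hgu i 0
    have f1 : g i (3 * t i - 3 + 1) = u i 1 := hgu i 1
    have f2 : g i (3 * t i - 3 + 2) = u i 2 := hgu i 2
    show List.map (g i) (List.range (3 * t i - 3)) ++
      [g i (3 * t i - 3 + 0), g i (3 * t i - 3 + 1), g i (3 * t i - 3 + 2)] = _
    rw [f0, f1, f2]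
  -- the blocks and the cycle
  set B : ℕ → List V := fun k => if hk : k < m then Ord ⟨k, hk⟩ ++ Q ⟨k, hk⟩ else []
    with hBdef
  set lastI : Fin m := ⟨m - 1, by omega⟩ with hlastI
  set τ : List V := [v lastI 0, v lastI 1] with hτ
  set rest : ℕ → List V := fun k => ((List.range' k (m - k)).flatMap B) ++ τ with hrest
  set C : List V := (List.range m).flatMap B with hCdef
  have hrest0 : rest 0 = C ++ τ := by
    simp [hrest, hCdef, List.range_eq_range']
  have hrestm : ∀ k, m ≤ k → rest k = τ := by
    intro k hk
    have : m - k = 0 := by omega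
    simp [hrest, this]
  have hrestsucc : ∀ k, k < m → rest k = B k ++ rest (k + 1) := by
    intro k hk
    show (List.range' k (m - k)).flatMap B ++ τ = _
    have e : m - k = (m - (k + 1)) + 1 := by omega
    rw [e, List.range'_succ, List.flatMap_cons, List.append_assoc]
  have hpredval : ∀ (k : ℕ) (hk : k < m) (hk1 : k + 1 < m),
      pred ⟨k + 1, hk1⟩ = ⟨k, hk⟩ := by
    intro k hk hk1
    apply Fin.ext
    show (k + 1 + (m - 1)) % m = k
    have e : k + 1 + (m - 1) = k + m := by omega
    rw [e, Nat.add_mod_right, Nat.mod_eq_of_lt hk]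
  have hpred0 : pred ⟨0, hm⟩ = lastI := by
    apply Fin.ext
    show (0 + (m - 1)) % m = m - 1
    rw [Nat.zero_add, Nat.mod_eq_of_lt (by omega)]
  -- square-sequence property of the connecting paths
  have hPsq : ∀ i, SqS G (P i) := by
    intro i k d hd hlt
    have h2 := (hsqp i).2 ⟨k, by omega⟩ ⟨k + d, hlt⟩ (by
      rcases hd with rfl | rfl
      · exact Or.inl rfl
      · exact Or.inr rfl)
    simpa [List.get_eq_getElem] using h2
  -- facts about Q
  have hQnd : ∀ i, (Q i).Nodup := by
    intro i
    have hnd : (P i).Nodup := (hsqp i).1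
    rw [hPeq i, List.nodup_append, List.nodup_append] at hnd
    exact hnd.1.2.1
  have hQP : ∀ (i : Fin m) (x : V), x ∈ Q i → x ∈ P i := by
    intro i x hx
    rw [hPeq i]
    exact List.mem_append_left _ (List.mem_append_right _ hx)
  -- nodup of blocks
  have hBnd : ∀ k, (B k).Nodup := by
    intro k
    by_cases hk : k < m
    · simp only [hBdef, dif_pos hk]
      rw [List.nodup_append]
      refine ⟨hOrdnd _, hQnd _, ?_⟩
      intro x hx y hx2 hxy
      rw [← hxy] at hx2
      obtain ⟨c, hc⟩ := hOrdmem' _ x hx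
      exact hQA _ x hx2 _ c hc
    · simp only [hBdef, dif_neg hk]
      exact List.nodup_nil
  have hBmem : ∀ (k : ℕ) (hk : k < m) (x : V), x ∈ B k →
      (∃ c : Fin 3, x ∈ A ⟨k, hk⟩ c) ∨ x ∈ Q ⟨k, hk⟩ := by
    intro k hk x hx
    simp only [hBdef, dif_pos hk] at hx
    rcases List.mem_append.1 hx with hx | hx
    · exact Or.inl (hOrdmem' _ x hx)
    · exact Or.inr hx
  have hBdisj : ∀ (k k' : ℕ), k ≠ k' → (B k).Disjoint (B k') := by
    intro k k' hkk x hx hx'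
    by_cases hk : k < m
    · by_cases hk' : k' < m
      · have hne : (⟨k, hk⟩ : Fin m) ≠ ⟨k', hk'⟩ := by
          intro hc
          exact hkk (congrArg Fin.val hc)
        rcases hBmem k hk x hx with ⟨c, hc⟩ | hxQ
        · rcases hBmem k' hk' x hx' with ⟨c', hc'⟩ | hxQ'
          · have hpne : ((⟨k, hk⟩ : Fin m), c) ≠ ((⟨k', hk'⟩ : Fin m), c') := by
              intro hc2
              rw [Prod.ext_iff] at hc2
              exact hne hc2.1
            exact Finset.disjoint_left.1 (hdisj _ _ _ _ hpne) hc hc'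
          · exact hQA _ x hxQ' _ c hc
        · rcases hBmem k' hk' x hx' with ⟨c', hc'⟩ | hxQ'
          · exact hQA _ x hxQ _ c' hc'
          · exact hPdisj _ _ hne (hQP _ x hxQ) (hQP _ x hxQ')
      · simp only [hBdef, dif_neg hk'] at hx'
        exact List.not_mem_nil hx'
    · simp only [hBdef, dif_neg hk] at hx
      exact List.not_mem_nil hx
  have hCnd : C.Nodup := by
    rw [hCdef, List.nodup_flatMap]
    refine ⟨fun k _ => hBnd k, ?_⟩
    have hpw : List.Pairwise (· < ·) (List.range m) := List.pairwise_lt_range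
    exact hpw.imp (fun hab => hBdisj _ _ (Nat.ne_of_lt hab))
  -- length of C
  have hBlen : ∀ (k : ℕ) (hk : k < m), 3 * t ⟨k, hk⟩ ≤ (B k).length := by
    intro k hk
    simp only [hBdef, dif_pos hk, List.length_append, hOrdlen]
    omega
  have hCsum : (∑ i : Fin m, 3 * t i) ≤ C.length := by
    have hre : C.length = ∑ k ∈ Finset.range m, (B k).length := by
      rw [hCdef, List.length_flatMap]
      rfl
    have h1 : (∑ i : Fin m, 3 * t i) =
        ∑ k ∈ Finset.range m, (if hk : k < m then 3 * t ⟨k, hk⟩ else 0) := by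
      rw [← Fin.sum_univ_eq_sum_range (fun k => if hk : k < m then 3 * t ⟨k, hk⟩ else 0) m]
      apply Finset.sum_congr rfl
      intro i _
      simp [i.isLt]
    rw [h1, hre]
    apply Finset.sum_le_sum
    intro k hk
    rw [Finset.mem_range] at hk
    simp only [dif_pos hk]
    exact hBlen k hk
  -- the main downward induction: every suffix chain is a square sequence
  have hsqrest : ∀ n k, m - k = n → SqS G (rest k) := by
    intro n
    induction n with
    | zero =>
      intro k hk
      rw [hrestm k (by omega)]
      intro i d hd hlt
      have hτlen : τ.length = 2 := rfl
      have hi0 : i = 0 ∧ d = 1 := by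
        rw [hτlen] at hlt
        rcases hd with rfl | rfl <;> omega
      obtain ⟨rfl, rfl⟩ := hi0
      show G.Adj (v lastI 0) (v lastI 1)
      exact hadj _ 0 1 (by decide) _ (hv lastI 0) _ (hv lastI 1)
    | succ n IH =>
      intro k hk
      have hkm : k < m := by omega
      have hih := IH (k + 1) (by omega)
      set i : Fin m := ⟨k, hkm⟩ with hidef
      have hPi : SqS G (([u i 0, u i 1, u i 2] ++ Q i) ++ [v i 0, v i 1, v i 2]) := by
        have := hPsq i
        rwa [hPeq i] at this
      have hcore : SqS G ([u i 0, u i 1, u i 2] ++ (Q i ++ rest (k + 1))) := by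
        by_cases hk1 : k + 1 < m
        · obtain ⟨Z, hZ⟩ := hOrdT ⟨k + 1, hk1⟩
          rw [hpredval k hkm hk1] at hZ
          have hsh : rest (k + 1) = [v i 0, v i 1, v i 2] ++
              (Z ++ (Q ⟨k + 1, hk1⟩ ++ rest (k + 2))) := by
            rw [hrestsucc (k + 1) hk1]
            simp only [hBdef, dif_pos hk1]
            rw [hZ]
            simp only [List.append_assoc]
            rfl
          have hglue := sqs_glue (p := [u i 0, u i 1, u i 2] ++ Q i)
            (s := [v i 0, v i 1, v i 2]) (q := Z ++ (Q ⟨k + 1, hk1⟩ ++ rest (k + 2)))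
            hPi (by rw [← hsh]; exact hih) (by simp)
          have e : ([u i 0, u i 1, u i 2] ++ Q i) ++
              ([v i 0, v i 1, v i 2] ++ (Z ++ (Q ⟨k + 1, hk1⟩ ++ rest (k + 2)))) =
              [u i 0, u i 1, u i 2] ++ (Q i ++ rest (k + 1)) := by
            rw [hsh]
            simp only [List.append_assoc]
          rw [e] at hglue
          exact hglue
        · have hilast : i = lastI := Fin.ext (by show k = m - 1; omega)
          have hre : rest (k + 1) = [v i 0, v i 1] := by
            rw [hrestm (k + 1) (by omega), hτ, hilast]
          rw [hre]
          apply sqs_prefix (q := [v i 2])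
          have e : ([u i 0, u i 1, u i 2] ++ (Q i ++ [v i 0, v i 1])) ++ [v i 2] =
              ([u i 0, u i 1, u i 2] ++ Q i) ++ [v i 0, v i 1, v i 2] := by
            simp
          rw [e]
          exact hPi
      obtain ⟨Y, hY⟩ := hOrdU i
      have hglue2 := sqs_glue (p := Y) (s := [u i 0, u i 1, u i 2])
        (q := Q i ++ rest (k + 1)) (by rw [← hY]; exact hOrdsq i) hcore (by simp)
      have e2 : Y ++ ([u i 0, u i 1, u i 2] ++ (Q i ++ rest (k + 1))) = rest k := by
        rw [hrestsucc k hkm]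
        simp only [hBdef, dif_pos hkm]
        rw [hY]
        simp only [List.append_assoc]
        rfl
      rw [e2] at hglue2
      exact hglue2
  have hCsq : SqS G (C ++ τ) := by
    rw [← hrest0]
    exact hsqrest m 0 (by omega)
  have hτl : τ.length = 2 := rfl
  have hlen6 : 6 ≤ C.length := by
    have h1 := Finset.single_le_sum (f := fun i : Fin m => 3 * t i)
      (fun i _ => by positivity) (Finset.mem_univ ⟨0, hm⟩)
    have h2 := ht2 ⟨0, hm⟩
    have h1' : 3 * t ⟨0, hm⟩ ≤ ∑ i : Fin m, 3 * t i := h1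
    omega
  -- the first two entries of C
  have hClow : ∀ (jv : ℕ) (a : Fin 3), jv = a.val → ∀ hj : jv < C.length,
      C[jv] = v lastI a := by
    intro jv a hjv hj
    have hCeq : C ++ τ = B 0 ++ rest 1 := by rw [← hrest0, hrestsucc 0 hm]
    have hB0eq : B 0 = Ord ⟨0, hm⟩ ++ Q ⟨0, hm⟩ := by simp only [hBdef, dif_pos hm]
    have hOl : (Ord ⟨0, hm⟩).length = 3 * t ⟨0, hm⟩ := hOrdlen _
    have ht0 := ht2 ⟨0, hm⟩
    have ha3 := a.isLt
    have hlt3 : jv < (Ord ⟨0, hm⟩).length := by omega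
    have hb : jv < (B 0).length := by
      rw [hB0eq, List.length_append]; omega
    have e1 : C[jv]'hj = (C ++ τ)[jv]'(by
        simp only [List.length_append]; omega) :=
      (List.getElem_append_left hj).symm
    have e2 : (C ++ τ)[jv]'(by simp only [List.length_append]; omega) =
        (B 0 ++ rest 1)[jv]'(by
          rw [← hCeq]; simp only [List.length_append]; omega) :=
      List.getElem_of_eq hCeq _
    have e3 : (B 0 ++ rest 1)[jv]'(by
          rw [← hCeq]; simp only [List.length_append]; omega) = (B 0)[jv]'hb :=
      List.getElem_append_left hb
    have e4 : (B 0)[jv]'hb = (Ord ⟨0, hm⟩ ++ Q ⟨0, hm⟩)[jv]'(by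
        rw [← hB0eq]; exact hb) := List.getElem_of_eq hB0eq _
    have e5 : (Ord ⟨0, hm⟩ ++ Q ⟨0, hm⟩)[jv]'(by rw [← hB0eq]; exact hb) =
        (Ord ⟨0, hm⟩)[jv]'hlt3 := List.getElem_append_left hlt3
    have e6 : (Ord ⟨0, hm⟩)[jv]'hlt3 = g ⟨0, hm⟩ jv := hOrdget _ _ hlt3
    have e7 : g ⟨0, hm⟩ jv = v lastI a := by
      rw [hjv, hg0 ⟨0, hm⟩ a, hpred0]
    rw [e1, e2, e3, e4, e5, e6, e7]
  -- final assembly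
  refine ⟨C.length, fun j => C.get j, ?_, ?_, ?_⟩
  · exact hsum.trans (Nat.cast_le.2 hCsum)
  · exact List.nodup_iff_injective_get.1 hCnd
  · intro i j hij
    have hCl : i.val < C.length := i.isLt
    simp only [List.get_eq_getElem]
    rcases hij with h1 | h2
    · by_cases hc : i.val + 1 < C.length
      · have hjv : j.val = i.val + 1 := by rw [← h1, Nat.mod_eq_of_lt hc]
        have hadj' := hCsq i.val 1 (Or.inl rfl)
          (by simp only [List.length_append, hτl]; omega)
        rw [List.getElem_append_left (as := C) (bs := τ) hCl,
          List.getElem_append_left (as := C) (bs := τ) hc] at hadj'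
        have hjv' : C[j.val]'j.isLt = C[i.val + 1]'hc := by
          congr 1
        rw [hjv']
        exact hadj'
      · have hiv : i.val + 1 = C.length := by omega
        have hjv : j.val = 0 := by rw [← h1, hiv, Nat.mod_self]
        have hadj' := hCsq i.val 1 (Or.inl rfl)
          (by simp only [List.length_append, hτl]; omega)
        rw [List.getElem_append_left (as := C) (bs := τ) hCl,
          List.getElem_append_right (as := C) (bs := τ) (i := i.val + 1)
            (by omega)] at hadj'
        have hidx : i.val + 1 - C.length = 0 := by omega
        simp only [hidx] at hadj'
        have hτ0 : τ[0]'(by rw [hτl]; omega) = v lastI 0 := rfl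
        rw [hτ0] at hadj'
        have : C[j.val]'j.isLt = v lastI 0 := by
          rw [hClow j.val 0 (by rw [hjv]; rfl) j.isLt]
        rw [this]
        exact hadj'
    · by_cases hc : i.val + 2 < C.length
      · have hjv : j.val = i.val + 2 := by rw [← h2, Nat.mod_eq_of_lt hc]
        have hadj' := hCsq i.val 2 (Or.inr rfl)
          (by simp only [List.length_append, hτl]; omega)
        rw [List.getElem_append_left (as := C) (bs := τ) hCl,
          List.getElem_append_left (as := C) (bs := τ) hc] at hadj'
        have hjv' : C[j.val]'j.isLt = C[i.val + 2]'hc := by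
          congr 1
        rw [hjv']
        exact hadj'
      · by_cases hc2 : i.val + 2 = C.length
        · have hjv : j.val = 0 := by rw [← h2, hc2, Nat.mod_self]
          have hadj' := hCsq i.val 2 (Or.inr rfl)
            (by simp only [List.length_append, hτl]; omega)
          rw [List.getElem_append_left (as := C) (bs := τ) hCl,
            List.getElem_append_right (as := C) (bs := τ) (i := i.val + 2)
              (by omega)] at hadj'
          have hidx : i.val + 2 - C.length = 0 := by omega
          simp only [hidx] at hadj'
          have hτ0 : τ[0]'(by rw [hτl]; omega) = v lastI 0 := rfl
          rw [hτ0] at hadj'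
          have : C[j.val]'j.isLt = v lastI 0 := by
            rw [hClow j.val 0 (by rw [hjv]; rfl) j.isLt]
          rw [this]
          exact hadj'
        · have hiv : i.val + 2 = C.length + 1 := by omega
          have hjv : j.val = 1 := by
            rw [← h2, hiv]
            have : C.length + 1 = 1 + C.length := by omega
            rw [this, Nat.add_mod_right, Nat.mod_eq_of_lt (by omega)]
          have hadj' := hCsq i.val 2 (Or.inr rfl)
            (by simp only [List.length_append, hτl]; omega)
          rw [List.getElem_append_left (as := C) (bs := τ) hCl,
            List.getElem_append_right (as := C) (bs := τ) (i := i.val + 2)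
              (by omega)] at hadj'
          have hidx : i.val + 2 - C.length = 1 := by omega
          simp only [hidx] at hadj'
          have hτ1 : τ[1]'(by rw [hτl]; omega) = v lastI 1 := rfl
          rw [hτ1] at hadj'
          have : C[j.val]'j.isLt = v lastI 1 := by
            rw [hClow j.val 1 (by rw [hjv]; rfl) j.isLt]
          rw [this]
          exact hadj'
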